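/- Under MTS alone, the sharp upper bound on the reverse persuasion rate θ^(r) equals min{(1 − P10/Q0)/(P11+P00), 1}: the maximum of (q2 − q8 + P11)/(q2 + q4 + P11) over q2,q4,q7,q8 satisfying 0 ≤ q2 ≤ P00, 0 ≤ q4 ≤ P10, 0 ≤ q7 ≤ P01, 0 ≤ q8 ≤ P11, q2+q4 ≤ P11·Q0/Q1, and P10·Q1/Q0 ≤ q7+q8 ≤ Q1 equals min{(P00/Q0)/(P11+P00), 1}, where Q0 = P00+P10, Q1 = P01+P11, noting 1 − P10/Q0 = P00/Q0. -/

import Mathlib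

/-- Under MTS alone, the sharp upper bound on the reverse persuasion rate
equals `min ((P00/Q0)/(P11+P00)) 1` with `Q0 = P00+P10`, `Q1 = P01+P11`. -/
theorem stmt9 (P00 P10 P01 P11 : ℝ)
    (h00 : 0 < P00) (h10 : 0 < P10) (h01 : 0 < P01) (h11 : 0 < P11)
    (hsum : P00 + P10 + P01 + P11 = 1) :
    IsGreatest
      {x : ℝ | ∃ q2 q4 q7 q8 : ℝ,
        0 ≤ q2 ∧ q2 ≤ P00 ∧ 0 ≤ q4 ∧ q4 ≤ P10 ∧
        0 ≤ q7 ∧ q7 ≤ P01 ∧ 0 ≤ q8 ∧ q8 ≤ P11 ∧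
        q2 + q4 ≤ P11 * (P00 + P10) / (P01 + P11) ∧
        P10 * (P01 + P11) / (P00 + P10) ≤ q7 + q8 ∧ q7 + q8 ≤ P01 + P11 ∧
        x = (q2 - q8 + P11) / (q2 + q4 + P11)}
      (min ((P00 / (P00 + P10)) / (P11 + P00)) 1) := by
  have hQ0 : (0:ℝ) < P00 + P10 := by linarith
  have hQ1 : (0:ℝ) < P01 + P11 := by linarith
  have hS : (0:ℝ) < P11 + P00 := by linarith
  constructor
  · by_cases hC : P11 * (P00 + P10) ≤ P00 * (P01 + P11)
    · -- min is 1
      have ha : (1:ℝ) ≤ (P00 / (P00 + P10)) / (P11 + P00) := by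
        rw [le_div_iff₀ hS, le_div_iff₀ hQ0]
        nlinarith
      refine ⟨0, 0, P10 * (P01 + P11) / (P00 + P10), 0, le_refl _, le_of_lt h00,
        le_refl _, le_of_lt h10, by positivity, ?_, le_refl _, le_of_lt h11, ?_, ?_, ?_, ?_⟩
      · rw [div_le_iff₀ hQ0]; nlinarith
      · rw [add_zero]; positivity
      · simp
      · rw [add_zero, div_le_iff₀ hQ0]; nlinarith
      · rw [min_eq_right ha]
        field_simp
        ring
    · -- min is a
      push_neg at hC
      have ha : (P00 / (P00 + P10)) / (P11 + P00) ≤ 1 := by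
        rw [div_le_one hS, div_le_iff₀ hQ0]
        nlinarith
      refine ⟨P00, 0, P01, P10 * (P01 + P11) / (P00 + P10) - P01, le_of_lt h00,
        le_refl _, le_refl _, le_of_lt h10, le_of_lt h01, le_refl _, ?_, ?_, ?_, ?_, ?_, ?_⟩
      · rw [sub_nonneg, le_div_iff₀ hQ0]; nlinarith
      · rw [sub_le_iff_le_add, div_le_iff₀ hQ0]; nlinarith
      · rw [le_div_iff₀ hQ1]; nlinarith
      · linarith [le_refl (P10 * (P01 + P11) / (P00 + P10))]
      · have h : P01 + (P10 * (P01 + P11) / (P00 + P10) - P01)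
            = P10 * (P01 + P11) / (P00 + P10) := by ring
        rw [h, div_le_iff₀ hQ0]; nlinarith
      · rw [min_eq_left ha]
        field_simp
        ring_nf
        linear_combination (-P00*(P00+P11)) * hsum
  · rintro x ⟨q2, q4, q7, q8, h2a, h2b, h4a, h4b, h7a, h7b, h8a, h8b, hup, hlo, hhi, hx⟩
    have hD : (0:ℝ) < q2 + q4 + P11 := by linarith
    have hlo' : P10 * (P01 + P11) ≤ (q7 + q8) * (P00 + P10) := by
      rw [div_le_iff₀ hQ0] at hlo; linarith
    rw [le_min_iff]
    constructor
    · by_cases hC : P00 * (P01 + P11) ≤ P11 * (P00 + P10)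
      · -- min is a case: direct inequality
        have hq8 : P10 * (P01 + P11) - P01 * (P00 + P10) ≤ q8 * (P00 + P10) := by
          nlinarith [mul_le_mul_of_nonneg_right h7b hQ0.le]
        have hkey : (0:ℝ) ≤ (P00 + P10) * (P11 + P00) - P00 := by nlinarith
        have hsum' : ((P00+P10)+(P01+P11)) * ((P11+P00)*P00) = (P11+P00)*P00 := by
          rw [show (P00+P10)+(P01+P11) = (1:ℝ) from by linarith, one_mul]
        rw [hx, div_div, div_le_div_iff₀ hD (by positivity)]
        nlinarith [mul_nonneg h4a h00.le,
          mul_nonneg (sub_nonneg.2 h2b) hkey,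
          mul_le_mul_of_nonneg_right hq8 hS.le, hsum']
      · push_neg at hC
        have hx1 : x ≤ 1 := by
          rw [hx, div_le_one hD]; linarith
        have ha : (1:ℝ) ≤ (P00 / (P00 + P10)) / (P11 + P00) := by
          rw [le_div_iff₀ hS, le_div_iff₀ hQ0]
          nlinarith
        linarith
    · rw [hx, div_le_one hD]; linarith
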